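/- Let P(λ) = ∑_{k=0}^d λ^k P_k be a regular n×n matrix polynomial over a field F with even degree d = 2t (t ≥ 2) and invertible trailing coefficient P_0. Let λB̃+Ã be a pencil of size (t+1)n×(t+1)n whose blocks M̃_{11}(λ) = −P_0, M̃_{12}(λ), M̃_{21}(λ), M̃_{22}(λ) satisfy M̃_{12}(λ)(Λ_{t−1}(λ)⊗I_n) = λ^t P_0, (Λ_{t−1}(λ)^T⊗I_n)M̃_{21}(λ) = λ^t P_0, and (Λ_{t−1}(λ)^T⊗I_n)M̃_{22}(λ)(Λ_{t−1}(λ)⊗I_n) = rev_d P(λ) − λ^d P_0, let L̃(λ) be the associated modified block Kronecker pencil with parameter σ ∈ {1,−1}, and set L(λ) := rev_1 L̃(λ). Then: (a) if λ0 ∈ F with λ0 ≠ 0 and z ∈ F^{2tn} with z ≠ 0 satisfy L(λ0)z = 0, then the (t+1)-th n×n block x of z satisfies x ≠ 0 and P(λ0)x = 0; (b) if z ∈ F^{2tn} with z ≠ 0 satisfies (rev_1 L)(0)·z = 0 (equivalently L̃(0)z = 0), then the (t+1)-th n×n block x of z satisfies x ≠ 0 and P_d x = 0, i.e., x is a right eigenvector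 of P for the eigenvalue ∞. -/

import Mathlib

open Polynomial Matrix
open scoped Kronecker

noncomputable section

/-- Entrywise inclusion of a constant matrix into polynomial matrices. -/
def matC {F : Type} [Field F] {m l : Type*} (M : Matrix m l F) : Matrix m l (Polynomial F) :=
  M.map fun a => (C a : Polynomial F)

/-- The pencil `λ ↦ A + λ B`, represented as a matrix over `F[λ]`. -/
def pencil {F : Type} [Field F] {m l : Type*} (A B : Matrix m l F) :
    Matrix m l (Polynomial F) :=
  matC A + (X : Polynomial F) • matC B

/-- Grade-`g` reversal `rev_g`, applied entrywise. -/
def revMat {F : Type} [Field F] {m l : Type*} (g : ℕ) (M : Matrix m l (Polynomial F)) :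
    Matrix m l (Polynomial F) :=
  M.map fun q => q.reflect g

/-- Entrywise evaluation of a polynomial matrix at a point. -/
def evalMat {F : Type} [Field F] {m l : Type*} (a : F) (M : Matrix m l (Polynomial F)) :
    Matrix m l F :=
  M.map fun q => q.eval a

/-- The matrix polynomial `P(λ) = ∑_{k=0}^d λ^k P_k` built from its coefficients. -/
def polyOfCoeffs {F : Type} [Field F] {n : ℕ} (d : ℕ) (Pc : ℕ → Matrix (Fin n) (Fin n) F) :
    Matrix (Fin n) (Fin n) (Polynomial F) :=
  ∑ k ∈ Finset.range (d + 1), (X : Polynomial F) ^ k • matC (Pc k)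

/-- The `(i,j)` block of a block-partitioned matrix. -/
def blk {α p q n m : Type*} (A : Matrix (p × n) (q × m) α) (i : p) (j : q) :
    Matrix n m α :=
  Matrix.of fun r c => A (i, r) (j, c)

/-- `Λ_s(λ) ⊗ I_n`, an `(s+1)n × n` polynomial matrix whose `i`-th block is `λ^{s-i} I_n`. -/
def Lam (F : Type) [Field F] (s n : ℕ) :
    Matrix (Fin (s+1) × Fin n) (Fin n) (Polynomial F) :=
  Matrix.of fun p c => if p.2 = c then (X : Polynomial F) ^ (s - (p.1 : ℕ)) else 0

/-- The pencil `L_s(λ) ∈ F[λ]^{s×(s+1)}` with `-1` on the diagonal and `λ` on the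
superdiagonal. -/
def Lpen (F : Type) [Field F] (s : ℕ) : Matrix (Fin s) (Fin (s+1)) (Polynomial F) :=
  Matrix.of fun i j =>
    if (j : ℕ) = (i : ℕ) then -1 else if (j : ℕ) = (i : ℕ) + 1 then X else 0

/-- The block Kronecker pencil `[[λB+A, L_s(λ)ᵀ⊗I_n],[σ L_s(λ)⊗I_n, 0]]` associated with a
pencil `M = λB+A` of size `(s+1)n × (s+1)n`. -/
def blockKron (F : Type) [Field F] (s n : ℕ) (σ : F)
    (M : Matrix (Fin (s+1) × Fin n) (Fin (s+1) × Fin n) (Polynomial F)) :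
    Matrix ((Fin (s+1) × Fin n) ⊕ (Fin s × Fin n)) ((Fin (s+1) × Fin n) ⊕ (Fin s × Fin n))
      (Polynomial F) :=
  Matrix.fromBlocks M (Lpen F s ⊗ₖ (1 : Matrix (Fin n) (Fin n) (Polynomial F)))ᵀ
    (σ • (Lpen F s ⊗ₖ (1 : Matrix (Fin n) (Fin n) (Polynomial F)))) 0

/-- `L` is a linearization of `P`: there are unimodular `U`, `V` with
`U L V = diag(I_m, P)` (up to the fixed identification of index sets). -/
def IsLinearization {F : Type} [Field F] (m : ℕ) {ι ρ : Type*} [Fintype ι] [DecidableEq ι]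
    [Fintype ρ] [DecidableEq ρ] (L : Matrix ι ι (Polynomial F))
    (P : Matrix ρ ρ (Polynomial F)) : Prop :=
  ∃ (e : (Fin m ⊕ ρ) ≃ ι) (U V : Matrix ι ι (Polynomial F)),
    IsUnit U.det ∧ IsUnit V.det ∧
      U * L * V =
        (Matrix.fromBlocks (1 : Matrix (Fin m) (Fin m) (Polynomial F)) 0 0 P).submatrix
          e.symm e.symm

/-- The block conditions `∑_{i+j=d+2-k} B_{ij} + ∑_{i+j=d+1-k} A_{ij} = P_k` for
`k = 0,…,d` (blocks are indexed here `0`-based, so `i+j` `1`-based is `i+j+2` `0`-based). -/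
def blockConds {F : Type} [Field F] {s n : ℕ} (d : ℕ) (Pc : ℕ → Matrix (Fin n) (Fin n) F)
    (A B : Matrix (Fin (s+1) × Fin n) (Fin (s+1) × Fin n) F) : Prop :=
  ∀ k, k ≤ d →
    (∑ p ∈ Finset.univ.filter
        (fun p : Fin (s+1) × Fin (s+1) => (p.1 : ℕ) + (p.2 : ℕ) + 2 + k = d + 2),
        blk B p.1 p.2) +
      (∑ p ∈ Finset.univ.filter
        (fun p : Fin (s+1) × Fin (s+1) => (p.1 : ℕ) + (p.2 : ℕ) + 2 + k = d + 1),
        blk A p.1 p.2) = Pc k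

/-- `L̂_t(λ) ⊗ I_n` (with `t = u+1`): first block column zero, remaining block columns
`L_{t-1}(λ) ⊗ I_n`; the column index is split as `Fin n ⊕ (Fin t × Fin n)`. -/
def LhatB (F : Type) [Field F] (u n : ℕ) :
    Matrix (Fin u × Fin n) (Fin n ⊕ Fin (u+1) × Fin n) (Polynomial F) :=
  Matrix.of fun p q =>
    match q with
    | Sum.inl _ => 0
    | Sum.inr c => (Lpen F u ⊗ₖ (1 : Matrix (Fin n) (Fin n) (Polynomial F))) p c

/-- The modified block Kronecker pencil `[[λB+A, L̂_t(λ)ᵀ⊗I_n],[σ L̂_t(λ)⊗I_n, 0]]`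
(with `t = u+1`). -/
def modBK (F : Type) [Field F] (u n : ℕ) (σ : F)
    (M : Matrix (Fin n ⊕ Fin (u+1) × Fin n) (Fin n ⊕ Fin (u+1) × Fin n) (Polynomial F)) :
    Matrix ((Fin n ⊕ Fin (u+1) × Fin n) ⊕ Fin u × Fin n)
      ((Fin n ⊕ Fin (u+1) × Fin n) ⊕ Fin u × Fin n) (Polynomial F) :=
  Matrix.fromBlocks M (LhatB F u n)ᵀ (σ • LhatB F u n) 0

/-- `Λ̂_t(λ) ⊗ I_n` (with `t = u+1`): the `(t+1)n × 2n` polynomial matrix whose transpose has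
block rows `(I_n, 0, …, 0)` and `(0, λ^{t-1}I_n, …, λ I_n, I_n)`. -/
def LamHatB (F : Type) [Field F] (u n : ℕ) :
    Matrix (Fin n ⊕ Fin (u+1) × Fin n) (Fin 2 × Fin n) (Polynomial F) :=
  Matrix.of fun q c =>
    match q with
    | Sum.inl r => if c.1 = 0 ∧ c.2 = r then 1 else 0
    | Sum.inr p => if c.1 = 1 ∧ c.2 = p.2 then (X : Polynomial F) ^ (u - (p.1 : ℕ)) else 0

/-- `Λ̃_t(λ) ⊗ I_n` (with `t = u+1`): the `(t+1)n × 2n` polynomial matrix whose transpose has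
block rows `(I_n, 0, …, 0)` and `(0, I_n, λ I_n, …, λ^{t-1} I_n)`. -/
def LamTildeB (F : Type) [Field F] (u n : ℕ) :
    Matrix (Fin n ⊕ Fin (u+1) × Fin n) (Fin 2 × Fin n) (Polynomial F) :=
  Matrix.of fun q c =>
    match q with
    | Sum.inl r => if c.1 = 0 ∧ c.2 = r then 1 else 0
    | Sum.inr p => if c.1 = 1 ∧ c.2 = p.2 then (X : Polynomial F) ^ (p.1 : ℕ) else 0

/-- A `2n × 2n` matrix assembled from four `n × n` blocks, indexed by `Fin 2 × Fin n`. -/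
def twoBlock {α : Type*} {n : ℕ} (W₁₁ W₁₂ W₂₁ W₂₂ : Matrix (Fin n) (Fin n) α) :
    Matrix (Fin 2 × Fin n) (Fin 2 × Fin n) α :=
  Matrix.of fun p q =>
    if p.1 = 0 then (if q.1 = 0 then W₁₁ p.2 q.2 else W₁₂ p.2 q.2)
    else (if q.1 = 0 then W₂₁ p.2 q.2 else W₂₂ p.2 q.2)

/-- `Λ_t(λ) ⊗ I_n` (with `t = u+1`), over the split row index `Fin n ⊕ (Fin t × Fin n)`:
block entries `λ^t I_n, λ^{t-1} I_n, …, λ I_n, I_n`. -/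
def LamFullB (F : Type) [Field F] (u n : ℕ) :
    Matrix (Fin n ⊕ Fin (u+1) × Fin n) (Fin n) (Polynomial F) :=
  Matrix.of fun q c =>
    match q with
    | Sum.inl r => if r = c then (X : Polynomial F) ^ (u + 1) else 0
    | Sum.inr p => if p.2 = c then (X : Polynomial F) ^ (u - (p.1 : ℕ)) else 0

/-- `N̂_t(λ) = Ĥ_t(λ) ⊗ I_n` (with `t = u+1`): `Ĥ_t ∈ F[λ]^{(t-1)×(t+1)}` has `(i,j)` entry
`λ^{i+1-j}` if `2 ≤ j ≤ i+1` and `0` otherwise. -/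
def NhatB (F : Type) [Field F] (u n : ℕ) :
    Matrix (Fin u × Fin n) (Fin n ⊕ Fin (u+1) × Fin n) (Polynomial F) :=
  Matrix.of fun p q =>
    match q with
    | Sum.inl _ => 0
    | Sum.inr c =>
        if (c.1 : ℕ) ≤ (p.1 : ℕ) ∧ p.2 = c.2 then
          (X : Polynomial F) ^ ((p.1 : ℕ) - (c.1 : ℕ)) else 0

end

section AuxStmt19

variable {F : Type} [Field F]

lemma evalMat_apply' {m l : Type*} (a : F) (M : Matrix m l (Polynomial F)) (i : m) (j : l) :
    evalMat a M i j = (M i j).eval a := rfl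

lemma evalMat_mul' {m l k : Type*} [Fintype l] (a : F) (M : Matrix m l (Polynomial F))
    (N : Matrix l k (Polynomial F)) :
    evalMat a (M * N) = evalMat a M * evalMat a N := by
  ext i j
  simp [evalMat, Matrix.mul_apply, Polynomial.eval_finset_sum]

lemma evalMat_transpose' {m l : Type*} (a : F) (M : Matrix m l (Polynomial F)) :
    evalMat a Mᵀ = (evalMat a M)ᵀ := rfl

lemma evalMat_sub' {m l : Type*} (a : F) (M N : Matrix m l (Polynomial F)) :
    evalMat a (M - N) = evalMat a M - evalMat a N := by
  ext i j
  simp [evalMat, Matrix.sub_apply]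

lemma evalMat_smulXpow' {m l : Type*} (a : F) (k : ℕ) (M : Matrix m l F) :
    evalMat a ((X : Polynomial F) ^ k • matC M) = a ^ k • M := by
  ext i j
  have h : ((X : Polynomial F) ^ k • matC M) i j = X ^ k * C (M i j) := by
    rw [Matrix.smul_apply, smul_eq_mul]; rfl
  rw [evalMat_apply', h, Matrix.smul_apply, smul_eq_mul]
  rw [Polynomial.eval_mul, Polynomial.eval_pow, Polynomial.eval_X, Polynomial.eval_C]

lemma sum_Lrow' {u : ℕ} (i : Fin u) (c : F) (g : Fin (u+1) → F) :
    (∑ j : Fin (u+1),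
      (if (j : ℕ) = (i : ℕ) then -1 else if (j : ℕ) = (i : ℕ) + 1 then c else 0) * g j)
      = -g i.castSucc + c * g i.succ := by
  rw [Fintype.sum_eq_add i.castSucc i.succ (ne_of_lt (Fin.castSucc_lt_succ (i := i)))]
  · simp
  · intro j hj
    have h1 : (j : ℕ) ≠ (i : ℕ) := fun h => hj.1 (Fin.ext (by simpa using h))
    have h2 : (j : ℕ) ≠ (i : ℕ) + 1 := fun h => hj.2 (Fin.ext (by simpa using h))
    simp [h1, h2]

lemma Kf_apply' (a : F) {u n : ℕ} (p : Fin u × Fin n) (q : Fin (u+1) × Fin n) :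
    evalMat a (Lpen F u ⊗ₖ (1 : Matrix (Fin n) (Fin n) (Polynomial F))) p q =
      (if (q.1 : ℕ) = (p.1 : ℕ) then -1 else if (q.1 : ℕ) = (p.1 : ℕ) + 1 then a else 0) *
        (if p.2 = q.2 then 1 else 0) := by
  rcases p with ⟨i, r⟩; rcases q with ⟨j, s⟩
  simp only [evalMat, Matrix.map_apply, Matrix.kroneckerMap_apply, Lpen, Matrix.one_apply,
    Matrix.of_apply]
  split_ifs <;> simp

lemma Kf_mulVec' (a : F) {u n : ℕ} (b : Fin (u+1) × Fin n → F) (i : Fin u) (r : Fin n) :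
    (evalMat a (Lpen F u ⊗ₖ (1 : Matrix (Fin n) (Fin n) (Polynomial F)))).mulVec b (i, r) =
      -b (i.castSucc, r) + a * b (i.succ, r) := by
  simp only [Matrix.mulVec, dotProduct, Kf_apply']
  rw [Fintype.sum_prod_type]
  have key : ∀ j : Fin (u+1), (∑ s : Fin n,
      ((if (j : ℕ) = (i : ℕ) then (-1 : F) else if (j : ℕ) = (i : ℕ) + 1 then a else 0) *
        (if r = s then 1 else 0)) * b (j, s))
      = (if (j : ℕ) = (i : ℕ) then (-1 : F) else if (j : ℕ) = (i : ℕ) + 1 then a else 0) *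
          b (j, r) := by
    intro j
    rw [Fintype.sum_eq_single r]
    · simp
    · intro s hs
      simp [Ne.symm hs]
  simp only [key]
  exact sum_Lrow' i a fun j => b (j, r)

lemma LamE_apply' (a : F) {u n : ℕ} (q : Fin (u+1) × Fin n) (c : Fin n) :
    evalMat a (Lam F u n) q c = if q.2 = c then a ^ (u - (q.1 : ℕ)) else 0 := by
  simp [evalMat, Lam, apply_ite (Polynomial.eval a)]

lemma LamE_mulVec' (a : F) {u n : ℕ} (x : Fin n → F) (p : Fin (u+1) × Fin n) :
    (evalMat a (Lam F u n)).mulVec x p = a ^ (u - (p.1 : ℕ)) * x p.2 := by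
  simp only [Matrix.mulVec, dotProduct, LamE_apply']
  rw [Fintype.sum_eq_single p.2]
  · simp
  · intro s hs
    simp [Ne.symm hs]

lemma Kf_mul_LamE' (a : F) (u n : ℕ) :
    evalMat a (Lpen F u ⊗ₖ (1 : Matrix (Fin n) (Fin n) (Polynomial F))) *
      evalMat a (Lam F u n) = 0 := by
  ext ⟨i, r⟩ c
  rw [Matrix.mul_apply]
  simp only [Kf_apply', LamE_apply']
  rw [Fintype.sum_prod_type]
  have key : ∀ j : Fin (u+1), (∑ s : Fin n,
      ((if (j : ℕ) = (i : ℕ) then (-1 : F) else if (j : ℕ) = (i : ℕ) + 1 then a else 0) *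
        (if r = s then 1 else 0)) * (if s = c then a ^ (u - (j : ℕ)) else 0))
      = (if (j : ℕ) = (i : ℕ) then (-1 : F) else if (j : ℕ) = (i : ℕ) + 1 then a else 0) *
          (if r = c then a ^ (u - (j : ℕ)) else 0) := by
    intro j
    rw [Fintype.sum_eq_single r]
    · simp
    · intro s hs
      simp [Ne.symm hs]
  simp only [key]
  rw [sum_Lrow' i a fun j => if r = c then a ^ (u - (j : ℕ)) else 0]
  simp only [Matrix.zero_apply, Fin.coe_castSucc, Fin.val_succ]
  by_cases hrc : r = c
  · rw [if_pos hrc, if_pos hrc]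
    have hexp : u - (i : ℕ) = (u - ((i : ℕ) + 1)) + 1 := by
      have := i.isLt; omega
    rw [hexp, pow_succ]
    ring
  · rw [if_neg hrc, if_neg hrc]
    ring

lemma reflect_reflect' {R : Type*} [Semiring R] (N : ℕ) (q : Polynomial R) :
    (q.reflect N).reflect N = q := by
  ext k
  rw [Polynomial.coeff_reflect, Polynomial.coeff_reflect, Polynomial.revAt_invol]

lemma eval_reflect_ne' (N : ℕ) (q : Polynomial F) (hq : q.natDegree ≤ N) {y : F} (hy : y ≠ 0) :
    (q.reflect N).eval y = y ^ N * q.eval y⁻¹ := by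
  have : Invertible (y⁻¹) := invertibleOfNonzero (inv_ne_zero hy)
  have h := Polynomial.eval₂_reflect_mul_pow (RingHom.id F) y⁻¹ N q hq
  rw [invOf_eq_inv, inv_inv] at h
  have h' : (q.reflect N).eval y * (y⁻¹) ^ N = q.eval y⁻¹ := by
    simpa [Polynomial.eval₂_id] using h
  have hcancel : (y⁻¹) ^ N * y ^ N = 1 := by
    rw [← mul_pow, inv_mul_cancel₀ hy, one_pow]
  calc (q.reflect N).eval y = (q.reflect N).eval y * ((y⁻¹) ^ N * y ^ N) := by
        rw [hcancel, mul_one]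
    _ = ((q.reflect N).eval y * (y⁻¹) ^ N) * y ^ N := by ring
    _ = q.eval y⁻¹ * y ^ N := by rw [h']
    _ = y ^ N * q.eval y⁻¹ := by ring

lemma natDegree_LhatB_le' (u n : ℕ) (p : Fin u × Fin n) (q : Fin n ⊕ Fin (u+1) × Fin n) :
    ((LhatB F u n) p q).natDegree ≤ 1 := by
  rcases q with r | c
  · simp [LhatB]
  · have h : (LhatB F u n) p (Sum.inr c) =
        (if (c.1 : ℕ) = (p.1 : ℕ) then (-1 : Polynomial F)
          else if (c.1 : ℕ) = (p.1 : ℕ) + 1 then X else 0) *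
          (if p.2 = c.2 then 1 else 0) := by
      simp [LhatB, Lpen, Matrix.one_apply]
    rw [h]
    refine le_trans Polynomial.natDegree_mul_le ?_
    have h1 : ((if (c.1 : ℕ) = (p.1 : ℕ) then (-1 : Polynomial F)
        else if (c.1 : ℕ) = (p.1 : ℕ) + 1 then X else 0)).natDegree ≤ 1 := by
      split_ifs <;> simp [Polynomial.natDegree_X_le]
    have h2 : ((if p.2 = c.2 then (1 : Polynomial F) else 0)).natDegree ≤ 0 := by
      split_ifs <;> simp
    omega

lemma natDegree_pencil_le' {m l : Type*} (A B : Matrix m l F) (i : m) (j : l) :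
    ((pencil A B) i j).natDegree ≤ 1 := by
  have h : (pencil A B) i j = C (A i j) + X * C (B i j) := by
    simp [pencil, matC, Matrix.add_apply, Matrix.smul_apply, smul_eq_mul]
  rw [h]
  refine le_trans (Polynomial.natDegree_add_le _ _) (max_le (by simp) ?_)
  refine le_trans (Polynomial.natDegree_mul_le) ?_
  simp [Polynomial.natDegree_X_le]

lemma natDegree_modBK_le' (u n : ℕ) (σ : F)
    (A B : Matrix (Fin n ⊕ Fin (u+1) × Fin n) (Fin n ⊕ Fin (u+1) × Fin n) F)
    (i j : (Fin n ⊕ Fin (u+1) × Fin n) ⊕ Fin u × Fin n) :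
    ((modBK F u n σ (pencil A B)) i j).natDegree ≤ 1 := by
  rcases i with q | p <;> rcases j with w | p'
  · simpa [modBK] using natDegree_pencil_le' A B q w
  · simpa [modBK] using natDegree_LhatB_le' u n p' q
  · have h : (modBK F u n σ (pencil A B)) (Sum.inr p) (Sum.inl w)
        = σ • (LhatB F u n p w) := rfl
    rw [h]
    exact le_trans (Polynomial.natDegree_smul_le _ _) (natDegree_LhatB_le' u n p w)
  · simp [modBK]

lemma polyOfCoeffs_apply' {n : ℕ} (d : ℕ) (Pc : ℕ → Matrix (Fin n) (Fin n) F) (i j : Fin n) :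
    polyOfCoeffs d Pc i j = ∑ k ∈ Finset.range (d+1), C (Pc k i j) * X ^ k := by
  rw [polyOfCoeffs, Matrix.sum_apply]
  refine Finset.sum_congr rfl fun k _ => ?_
  rw [Matrix.smul_apply, smul_eq_mul, show matC (Pc k) i j = C (Pc k i j) from rfl]
  ring

lemma natDegree_polyOfCoeffs_le' {n : ℕ} (d : ℕ) (Pc : ℕ → Matrix (Fin n) (Fin n) F)
    (i j : Fin n) : (polyOfCoeffs d Pc i j).natDegree ≤ d := by
  rw [polyOfCoeffs_apply']
  rw [Polynomial.natDegree_le_iff_coeff_eq_zero]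
  intro N hN
  rw [Polynomial.finset_sum_coeff]
  apply Finset.sum_eq_zero
  intro k hk
  rw [Polynomial.coeff_C_mul, Polynomial.coeff_X_pow]
  have hk' : k < d + 1 := Finset.mem_range.mp hk
  have : N ≠ k := by omega
  simp [this]

lemma coeff_polyOfCoeffs_top' {n : ℕ} (d : ℕ) (Pc : ℕ → Matrix (Fin n) (Fin n) F)
    (i j : Fin n) : (polyOfCoeffs d Pc i j).coeff d = Pc d i j := by
  rw [polyOfCoeffs_apply', Polynomial.finset_sum_coeff]
  rw [Finset.sum_eq_single d]
  · simp
  · intro k hk hkd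
    rw [Polynomial.coeff_C_mul, Polynomial.coeff_X_pow]
    simp [Ne.symm hkd]
  · intro hd
    exact absurd (Finset.self_mem_range_succ d) hd

end AuxStmt19

lemma stmt19_core {F : Type} [Field F] {n u : ℕ} (Pc : ℕ → Matrix (Fin n) (Fin n) F)
    (hP0 : IsUnit (Pc 0).det) {σ : F} (hσ : σ ≠ 0)
    (A B : Matrix (Fin n ⊕ Fin (u+1) × Fin n) (Fin n ⊕ Fin (u+1) × Fin n) F)
    (h11 : (pencil A B).toBlocks₁₁ = -(matC (Pc 0)))
    (h12 : (pencil A B).toBlocks₁₂ * Lam F u n = (X : Polynomial F) ^ (u+1) • matC (Pc 0))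
    (h21 : (Lam F u n)ᵀ * (pencil A B).toBlocks₂₁ =
      (X : Polynomial F) ^ (u+1) • matC (Pc 0))
    (h22 : (Lam F u n)ᵀ * (pencil A B).toBlocks₂₂ * Lam F u n =
      revMat (2*(u+1)) (polyOfCoeffs (2*(u+1)) Pc) -
        (X : Polynomial F) ^ (2*(u+1)) • matC (Pc 0))
    (μ : F) (z : ((Fin n ⊕ Fin (u+1) × Fin n) ⊕ Fin u × Fin n) → F) (hz0 : z ≠ 0)
    (hz : (evalMat μ (modBK F u n σ (pencil A B))).mulVec z = 0) :
    (fun r => z (Sum.inl (Sum.inr (Fin.last u, r)))) ≠ 0 ∧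
      (evalMat μ (revMat (2*(u+1)) (polyOfCoeffs (2*(u+1)) Pc))).mulVec
        (fun r => z (Sum.inl (Sum.inr (Fin.last u, r)))) = 0 := by
  classical
  set x : Fin n → F := fun r => z (Sum.inl (Sum.inr (Fin.last u, r))) with hx_def
  set a : Fin n → F := fun r => z (Sum.inl (Sum.inl r)) with ha_def
  set bb : Fin (u+1) × Fin n → F := fun p => z (Sum.inl (Sum.inr p)) with hbb_def
  set v : Fin u × Fin n → F := fun p => z (Sum.inr p) with hv_def
  -- decompose the modified block Kronecker pencil
  have hMod : evalMat μ (modBK F u n σ (pencil A B)) =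
      Matrix.fromBlocks (evalMat μ (pencil A B)) (evalMat μ ((LhatB F u n)ᵀ))
        (σ • evalMat μ (LhatB F u n)) 0 := by
    ext i j
    rcases i with i | i <;> rcases j with j | j <;>
      simp [modBK, evalMat, Matrix.smul_apply, Polynomial.eval_smul, smul_eq_mul]
  have hzdec : z = Sum.elim (z ∘ Sum.inl) (z ∘ Sum.inr) := by
    funext q; rcases q with q | q <;> rfl
  rw [hMod, hzdec, Matrix.fromBlocks_mulVec] at hz
  simp only [Sum.elim_comp_inl, Sum.elim_comp_inr] at hz
  have hTop : (evalMat μ (pencil A B)).mulVec (z ∘ Sum.inl) +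
      (evalMat μ ((LhatB F u n)ᵀ)).mulVec v = 0 := by
    funext w; exact congrFun hz (Sum.inl w)
  have hBotV : (σ • evalMat μ (LhatB F u n)).mulVec (z ∘ Sum.inl) +
      (0 : Matrix (Fin u × Fin n) (Fin u × Fin n) F).mulVec v = 0 := by
    funext p; exact congrFun hz (Sum.inr p)
  have hBot : (evalMat μ (LhatB F u n)).mulVec (z ∘ Sum.inl) = 0 := by
    rw [Matrix.zero_mulVec, add_zero, Matrix.smul_mulVec] at hBotV
    exact (smul_eq_zero.mp hBotV).resolve_left hσ
  -- kernel equations for the lower-left block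
  have hKb : ∀ (i : Fin u) (r : Fin n),
      -bb (i.castSucc, r) + μ * bb (i.succ, r) = 0 := by
    intro i r
    have h := congrFun hBot (i, r)
    have hsplit : (evalMat μ (LhatB F u n)).mulVec (z ∘ Sum.inl) (i, r)
        = (evalMat μ (Lpen F u ⊗ₖ (1 : Matrix (Fin n) (Fin n) (Polynomial F)))).mulVec
            bb (i, r) := by
      simp only [Matrix.mulVec, dotProduct, Fintype.sum_sum_type]
      simp [LhatB, evalMat, hbb_def]
    rw [hsplit, Kf_mulVec'] at h
    exact h
  -- the middle blocks are powers of μ times the last one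
  have hbval : ∀ (j : Fin (u+1)) (r : Fin n),
      bb (j, r) = μ ^ (u - (j : ℕ)) * x r := by
    have key : ∀ k : ℕ, k ≤ u → ∀ (j : Fin (u+1)), (j : ℕ) = u - k → ∀ r : Fin n,
        bb (j, r) = μ ^ k * x r := by
      intro k
      induction k with
      | zero =>
        intro _ j hj r
        have : j = Fin.last u := Fin.ext (by simpa using hj)
        rw [this, pow_zero, one_mul]
      | succ k ih =>
        intro hk j hj r
        have hi : (j : ℕ) < u := by omega
        have h := hKb ⟨(j : ℕ), hi⟩ r
        have e1 : (⟨(j : ℕ), hi⟩ : Fin u).castSucc = j := Fin.ext (by simp)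
        have hsucc := ih (by omega) (⟨(j : ℕ), hi⟩ : Fin u).succ (by simp; omega) r
        rw [e1, hsucc] at h
        have : bb (j, r) = μ * (μ ^ k * x r) := by linear_combination -h
        rw [this, pow_succ]
        ring
    intro j r
    exact key (u - (j : ℕ)) (by omega) j (by omega) r
  have hbmat : bb = (evalMat μ (Lam F u n)).mulVec x := by
    funext p
    rw [LamE_mulVec']
    exact hbval p.1 p.2
  -- split the top equation into blocks
  have hEP : evalMat μ (pencil A B) = Matrix.fromBlocks (-(Pc 0))
      (evalMat μ ((pencil A B).toBlocks₁₂)) (evalMat μ ((pencil A B).toBlocks₂₁))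
      (evalMat μ ((pencil A B).toBlocks₂₂)) := by
    ext i j
    rcases i with i | i <;> rcases j with j | j
    · have h : (pencil A B) (Sum.inl i) (Sum.inl j) = (pencil A B).toBlocks₁₁ i j := rfl
      rw [evalMat_apply', h, h11]
      simp [matC, Matrix.neg_apply]
    · rfl
    · rfl
    · rfl
  have hzin : (z ∘ Sum.inl) = Sum.elim a bb := by
    funext q; rcases q with q | q <;> rfl
  rw [hEP, hzin, Matrix.fromBlocks_mulVec] at hTop
  simp only [Sum.elim_comp_inl, Sum.elim_comp_inr] at hTop
  have hT0 : ∀ w : Fin n, (evalMat μ ((LhatB F u n)ᵀ)).mulVec v (Sum.inl w) = 0 := by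
    intro w
    simp [Matrix.mulVec, dotProduct, evalMat, LhatB]
  have hT1 : (-(Pc 0)).mulVec a + (evalMat μ ((pencil A B).toBlocks₁₂)).mulVec bb = 0 := by
    funext r
    have h := congrFun hTop (Sum.inl r)
    simpa [hT0 r] using h
  have hT2 : (evalMat μ ((pencil A B).toBlocks₂₁)).mulVec a +
      (evalMat μ ((pencil A B).toBlocks₂₂)).mulVec bb +
      ((evalMat μ (Lpen F u ⊗ₖ (1 : Matrix (Fin n) (Fin n) (Polynomial F))))ᵀ).mulVec v
        = 0 := by
    funext c
    have h := congrFun hTop (Sum.inr c)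
    have hc : (evalMat μ ((LhatB F u n)ᵀ)).mulVec v (Sum.inr c)
        = ((evalMat μ (Lpen F u ⊗ₖ (1 : Matrix (Fin n) (Fin n) (Polynomial F))))ᵀ).mulVec
            v c := by
      simp [Matrix.mulVec, dotProduct, evalMat, LhatB, Matrix.transpose_apply]
    simp only [Pi.add_apply, Sum.elim_inr, Pi.zero_apply] at h
    rw [hc] at h
    simpa [add_assoc] using h
  -- first block equation gives a = μ^(u+1) • x
  have h12e : (evalMat μ ((pencil A B).toBlocks₁₂)).mulVec bb
      = μ ^ (u+1) • (Pc 0).mulVec x := by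
    rw [hbmat, Matrix.mulVec_mulVec, ← evalMat_mul', h12, evalMat_smulXpow',
      Matrix.smul_mulVec]
  have ha : a = μ ^ (u+1) • x := by
    have hMa : (Pc 0).mulVec a = (Pc 0).mulVec (μ ^ (u+1) • x) := by
      have h := hT1
      rw [h12e, Matrix.neg_mulVec] at h
      rw [Matrix.mulVec_smul]
      exact (neg_add_eq_zero.mp h)
    exact Matrix.mulVec_injective_iff_isUnit.mpr
      ((Matrix.isUnit_iff_isUnit_det _).mpr hP0) hMa
  -- multiply the second block equation by Λᵀ ⊗ I
  have hfin := congrArg (fun w => ((evalMat μ (Lam F u n))ᵀ).mulVec w) hT2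
  simp only [Matrix.mulVec_add, Matrix.mulVec_zero] at hfin
  have ht3 : ((evalMat μ (Lam F u n))ᵀ).mulVec
      (((evalMat μ (Lpen F u ⊗ₖ (1 : Matrix (Fin n) (Fin n) (Polynomial F))))ᵀ).mulVec v)
      = 0 := by
    rw [Matrix.mulVec_mulVec, ← Matrix.transpose_mul, Kf_mul_LamE', Matrix.transpose_zero,
      Matrix.zero_mulVec]
  have ht1 : ((evalMat μ (Lam F u n))ᵀ).mulVec
      ((evalMat μ ((pencil A B).toBlocks₂₁)).mulVec a)
      = μ ^ (u+1) • (Pc 0).mulVec a := by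
    rw [Matrix.mulVec_mulVec, ← evalMat_transpose', ← evalMat_mul', h21, evalMat_smulXpow',
      Matrix.smul_mulVec]
  have ht2 : ((evalMat μ (Lam F u n))ᵀ).mulVec
      ((evalMat μ ((pencil A B).toBlocks₂₂)).mulVec bb)
      = (evalMat μ (revMat (2*(u+1)) (polyOfCoeffs (2*(u+1)) Pc))).mulVec x
        - μ ^ (2*(u+1)) • (Pc 0).mulVec x := by
    rw [hbmat, Matrix.mulVec_mulVec, Matrix.mulVec_mulVec,
      ← evalMat_transpose', ← evalMat_mul', ← evalMat_mul', h22, evalMat_sub',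
      evalMat_smulXpow', Matrix.sub_mulVec, Matrix.smul_mulVec]
  rw [ht1, ht2, ht3, ha, Matrix.mulVec_smul, smul_smul, ← pow_add] at hfin
  have hdd : (u + 1) + (u + 1) = 2 * (u + 1) := by ring
  rw [hdd] at hfin
  have hR : (evalMat μ (revMat (2*(u+1)) (polyOfCoeffs (2*(u+1)) Pc))).mulVec x = 0 := by
    have h := hfin
    funext r
    have h' := congrFun h r
    simp only [Pi.add_apply, Pi.sub_apply, Pi.smul_apply, Pi.zero_apply, smul_eq_mul] at h'
    simp only [Pi.zero_apply]
    linear_combination h'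
  refine ⟨?_, hR⟩
  intro hx
  apply hz0
  have hbb0 : bb = 0 := by
    funext p
    rw [show bb p = bb (p.1, p.2) from rfl, hbval p.1 p.2]
    simp [show x = 0 from hx]
  have ha0 : a = 0 := by
    rw [ha, show x = 0 from hx]
    simp
  have hKv : ((evalMat μ (Lpen F u ⊗ₖ (1 : Matrix (Fin n) (Fin n) (Polynomial F))))ᵀ).mulVec
      v = 0 := by
    have h := hT2
    rw [hbb0, ha0, Matrix.mulVec_zero, Matrix.mulVec_zero, zero_add, zero_add] at h
    exact h
  have hcomp : ∀ (j : Fin (u+1)) (s : Fin n),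
      (∑ i : Fin u,
        (if (j : ℕ) = (i : ℕ) then (-1 : F) else if (j : ℕ) = (i : ℕ) + 1 then μ else 0)
          * v (i, s)) = 0 := by
    intro j s
    have h := congrFun hKv (j, s)
    simp only [Matrix.mulVec, dotProduct, Matrix.transpose_apply, Kf_apply',
      Pi.zero_apply] at h
    rw [Fintype.sum_prod_type] at h
    have key : ∀ i : Fin u, (∑ s' : Fin n,
        ((if (j : ℕ) = (i : ℕ) then (-1 : F) else if (j : ℕ) = (i : ℕ) + 1 then μ else 0) *
          (if s' = s then 1 else 0)) * v (i, s'))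
        = (if (j : ℕ) = (i : ℕ) then (-1 : F) else if (j : ℕ) = (i : ℕ) + 1 then μ else 0) *
            v (i, s) := by
      intro i
      rw [Fintype.sum_eq_single s]
      · simp
      · intro s' hs'
        simp [hs']
    rw [Fintype.sum_congr _ _ key] at h
    exact h
  have hvval : ∀ (m : ℕ) (hm : m < u) (s : Fin n), v (⟨m, hm⟩, s) = 0 := by
    intro m
    induction m with
    | zero =>
      intro hm s
      have h := hcomp ⟨0, by omega⟩ s
      rw [Fintype.sum_eq_single (⟨0, hm⟩ : Fin u)] at h
      · have h' : (if (0 : ℕ) = (0 : ℕ) then (-1 : F)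
            else if (0 : ℕ) = (0 : ℕ) + 1 then μ else 0) * v (⟨0, hm⟩, s) = 0 := h
        rw [if_pos rfl] at h'
        linear_combination -h'
      · intro i hi
        have h1 : (0 : ℕ) ≠ (i : ℕ) :=
          fun hh => hi (Fin.ext (show (i : ℕ) = 0 from hh.symm))
        have h2 : (0 : ℕ) ≠ (i : ℕ) + 1 := by omega
        simp [h1, h2]
    | succ m ih =>
      intro hm s
      have h := hcomp ⟨m+1, by omega⟩ s
      rw [Fintype.sum_eq_add (⟨m+1, hm⟩ : Fin u) (⟨m, by omega⟩ : Fin u)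
        (by simp [Fin.ext_iff])] at h
      · have h' : (if (m+1 : ℕ) = (m+1 : ℕ) then (-1 : F)
              else if (m+1 : ℕ) = (m+1 : ℕ) + 1 then μ else 0) * v (⟨m+1, hm⟩, s)
            + (if (m+1 : ℕ) = (m : ℕ) then (-1 : F)
              else if (m+1 : ℕ) = (m : ℕ) + 1 then μ else 0) * v (⟨m, by omega⟩, s)
              = 0 := h
        rw [if_pos rfl] at h'
        rw [if_neg (by omega : ¬ (m+1 : ℕ) = (m : ℕ)), if_pos rfl] at h'
        rw [ih (by omega) s] at h'
        linear_combination -h'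
      · intro i hi
        have h1 : (m + 1 : ℕ) ≠ (i : ℕ) :=
          fun hh => hi.1 (Fin.ext (show (i : ℕ) = m + 1 from hh.symm))
        have h2 : (m + 1 : ℕ) ≠ (i : ℕ) + 1 :=
          fun hh => hi.2 (Fin.ext (show (i : ℕ) = m by omega))
        have h3 : (m : ℕ) ≠ (i : ℕ) := fun hh => h2 (by omega)
        simp [h1, h2, h3]
  have hv0 : v = 0 := by
    funext p
    have := hvval (p.1 : ℕ) p.1.isLt p.2
    simpa using this
  funext q
  rcases q with (q | q) | q
  · exact congrFun ha0 q
  · exact congrFun hbb0 q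
  · exact congrFun hv0 q

/-- (Recovery for even degree `d = 2t` with invertible trailing
coefficient, `t = u+1 ≥ 2`.) With `L̃(λ)` the modified block Kronecker pencil for `rev_d P`
and `L(λ) := rev_1 L̃(λ)`: (a) for `λ0 ≠ 0`, the `(t+1)`-th block of any `0 ≠ z` with
`L(λ0)z = 0` is a right eigenvector of `P` with eigenvalue `λ0`; (b) the `(t+1)`-th block
of any `0 ≠ z` with `(rev_1 L)(0)z = 0` is a right eigenvector of `P` for `∞`. -/
theorem stmt_19 {F : Type} [Field F] (n u : ℕ) (hn : 0 < n) (hu : 1 ≤ u)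
    (Pc : ℕ → Matrix (Fin n) (Fin n) F)
    (hdeg : Pc (2*(u+1)) ≠ 0)
    (hreg : (polyOfCoeffs (2*(u+1)) Pc).det ≠ 0)
    (hP0 : IsUnit (Pc 0).det)
    (σ : F) (hσ : σ = 1 ∨ σ = -1)
    (A B : Matrix (Fin n ⊕ Fin (u+1) × Fin n) (Fin n ⊕ Fin (u+1) × Fin n) F)
    (h11 : (pencil A B).toBlocks₁₁ = -(matC (Pc 0)))
    (h12 : (pencil A B).toBlocks₁₂ * Lam F u n = (X : Polynomial F) ^ (u+1) • matC (Pc 0))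
    (h21 : (Lam F u n)ᵀ * (pencil A B).toBlocks₂₁ =
      (X : Polynomial F) ^ (u+1) • matC (Pc 0))
    (h22 : (Lam F u n)ᵀ * (pencil A B).toBlocks₂₂ * Lam F u n =
      revMat (2*(u+1)) (polyOfCoeffs (2*(u+1)) Pc) -
        (X : Polynomial F) ^ (2*(u+1)) • matC (Pc 0)) :
    (∀ lam0 : F, lam0 ≠ 0 →
      ∀ z : ((Fin n ⊕ Fin (u+1) × Fin n) ⊕ Fin u × Fin n) → F, z ≠ 0 →
        (evalMat lam0 (revMat 1 (modBK F u n σ (pencil A B)))).mulVec z = 0 →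
          (fun r => z (Sum.inl (Sum.inr (Fin.last u, r)))) ≠ 0 ∧
            (evalMat lam0 (polyOfCoeffs (2*(u+1)) Pc)).mulVec
              (fun r => z (Sum.inl (Sum.inr (Fin.last u, r)))) = 0) ∧
    (∀ z : ((Fin n ⊕ Fin (u+1) × Fin n) ⊕ Fin u × Fin n) → F, z ≠ 0 →
      (evalMat (0 : F) (revMat 1 (revMat 1 (modBK F u n σ (pencil A B))))).mulVec z = 0 →
        (fun r => z (Sum.inl (Sum.inr (Fin.last u, r)))) ≠ 0 ∧
          (Pc (2*(u+1))).mulVec (fun r => z (Sum.inl (Sum.inr (Fin.last u, r)))) = 0) := by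
  have hσ' : σ ≠ 0 := by rcases hσ with h | h <;> rw [h] <;> simp
  constructor
  · intro lam0 hl z hz0 hzE
    have hμ : (lam0⁻¹ : F) ≠ 0 := inv_ne_zero hl
    have hev : evalMat lam0 (revMat 1 (modBK F u n σ (pencil A B)))
        = lam0 • evalMat lam0⁻¹ (modBK F u n σ (pencil A B)) := by
      ext i j
      rw [evalMat_apply', revMat, Matrix.map_apply,
        eval_reflect_ne' 1 _ (natDegree_modBK_le' u n σ A B i j) hl]
      rw [Matrix.smul_apply, evalMat_apply', smul_eq_mul, pow_one]
    rw [hev, Matrix.smul_mulVec] at hzE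
    have hz' := (smul_eq_zero.mp hzE).resolve_left hl
    obtain ⟨hx, hPx⟩ := stmt19_core Pc hP0 hσ' A B h11 h12 h21 h22 lam0⁻¹ z hz0 hz'
    refine ⟨hx, ?_⟩
    have hconv : evalMat lam0⁻¹ (revMat (2*(u+1)) (polyOfCoeffs (2*(u+1)) Pc))
        = (lam0⁻¹) ^ (2*(u+1)) • evalMat lam0 (polyOfCoeffs (2*(u+1)) Pc) := by
      ext i j
      rw [evalMat_apply', revMat, Matrix.map_apply,
        eval_reflect_ne' _ _ (natDegree_polyOfCoeffs_le' _ _ _ _) hμ, inv_inv]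
      rw [Matrix.smul_apply, evalMat_apply', smul_eq_mul]
    rw [hconv, Matrix.smul_mulVec] at hPx
    exact (smul_eq_zero.mp hPx).resolve_left (pow_ne_zero _ hμ)
  · intro z hz0 hzE
    have hrr : revMat 1 (revMat 1 (modBK F u n σ (pencil A B)))
        = modBK F u n σ (pencil A B) := by
      ext i j
      rw [revMat, revMat, Matrix.map_apply, Matrix.map_apply, reflect_reflect']
    rw [hrr] at hzE
    obtain ⟨hx, hPx⟩ := stmt19_core Pc hP0 hσ' A B h11 h12 h21 h22 0 z hz0 hzE
    refine ⟨hx, ?_⟩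
    have hconv : evalMat (0 : F) (revMat (2*(u+1)) (polyOfCoeffs (2*(u+1)) Pc))
        = Pc (2*(u+1)) := by
      ext i j
      rw [evalMat_apply', revMat, Matrix.map_apply, ← Polynomial.coeff_zero_eq_eval_zero,
        Polynomial.coeff_reflect, Polynomial.revAt_le (Nat.zero_le _), Nat.sub_zero,
        coeff_polyOfCoeffs_top']
    rw [hconv] at hPx
    exact hPx
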